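/- Let K be an infinite compact Hausdorff totally disconnected space such that every injective bounded linear operator on C(K) is surjective, and let L be a nonempty proper clopen subset of K. Then the Banach space C(L) is not isomorphic to C(K) (there is no bijective bounded linear operator from C(K) onto C(L)). -/

import Mathlib

open Set
open scoped Classical

/-- Extension by zero of a continuous function on a clopen set is continuous. -/
lemma continuous_extend_zero {K : Type*} [TopologicalSpace K] {L : Set K} (hL : IsClopen L)
    (g : C(L, ℝ)) :
    Continuous (fun x : K => if hx : x ∈ L then g ⟨x, hx⟩ else 0) := by
  rw [continuous_iff_continuousAt]
  intro x
  by_cases hx : x ∈ L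
  · apply ContinuousOn.continuousAt (s := L) _ (hL.isOpen.mem_nhds hx)
    rw [continuousOn_iff_continuous_restrict]
    have : L.domRestrict (fun x : K => if hx : x ∈ L then g ⟨x, hx⟩ else 0) = g := by
      funext y
      simp [Set.domRestrict, y.2]
    rw [this]
    exact g.continuous
  · apply ContinuousOn.continuousAt (s := Lᶜ) _ (hL.compl.isOpen.mem_nhds hx)
    apply continuousOn_const (c := (0:ℝ)) |>.congr
    intro y hy
    exact dif_neg hy

theorem CL_not_isomorphic_CK
    (K : Type*) [TopologicalSpace K] [CompactSpace K] [T2Space K] [Infinite K]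
    [TotallyDisconnectedSpace K]
    (hfew : ∀ T : C(K, ℝ) →L[ℝ] C(K, ℝ), Function.Injective T → Function.Surjective T)
    (L : Set K) (hL : IsClopen L) (hne : L.Nonempty) (hproper : L ≠ Set.univ) :
    haveI : CompactSpace L := isCompact_iff_compactSpace.mp (hL.isClosed.isCompact)
    ¬ ∃ T : C(K, ℝ) →L[ℝ] C(L, ℝ), Function.Bijective T := by
  haveI : CompactSpace L := isCompact_iff_compactSpace.mp (hL.isClosed.isCompact)
  rintro ⟨T, hT⟩
  -- extension-by-zero operator E : C(L) → C(K)
  classical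
  let Eext : C(L, ℝ) →ₗ[ℝ] C(K, ℝ) :=
    { toFun := fun g => ⟨fun x => if hx : x ∈ L then g ⟨x, hx⟩ else 0,
        continuous_extend_zero hL g⟩
      map_add' := by
        intro g h
        ext x
        by_cases hx : x ∈ L <;> simp [hx]
      map_smul' := by
        intro c g
        ext x
        by_cases hx : x ∈ L <;> simp [hx] }
  have hEbound : ∀ g : C(L, ℝ), ‖Eext g‖ ≤ 1 * ‖g‖ := by
    intro g
    rw [one_mul]
    apply ContinuousMap.norm_le _ (norm_nonneg g) |>.mpr
    intro x
    show ‖if hx : x ∈ L then g ⟨x, hx⟩ else 0‖ ≤ ‖g‖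
    by_cases hx : x ∈ L
    · rw [dif_pos hx]; exact g.norm_coe_le_norm _
    · rw [dif_neg hx]; simp
  let E : C(L, ℝ) →L[ℝ] C(K, ℝ) := LinearMap.mkContinuous Eext 1 hEbound
  have hEinj : Function.Injective E := by
    intro g h hgh
    ext y
    have := congrArg (fun f : C(K, ℝ) => f (y : K)) hgh
    simpa [E, Eext, LinearMap.mkContinuous, y.2] using this
  -- S = E ∘ T is injective, hence surjective
  have hSinj : Function.Injective (E.comp T) := by
    intro f g h
    exact hT.1 (hEinj h)
  have hSsurj := hfew (E.comp T) hSinj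
  -- pick a point outside L
  obtain ⟨x₀, hx₀⟩ : ∃ x, x ∉ L := by
    by_contra h
    push_neg at h
    exact hproper (Set.eq_univ_of_forall h)
  obtain ⟨f, hf⟩ := hSsurj 1
  have h1 : (E.comp T) f x₀ = 0 := by
    simp [E, Eext, LinearMap.mkContinuous, hx₀]
  rw [hf] at h1
  simp at h1
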